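/- Let p ≥ 2, α ≥ 0 and n be real numbers, and let R > 0. Let u : (0,R) → ℝ be twice differentiable, and define ω on (0, R^{1+α/p}) by ω(s) = u(s^{p/(p+α)}) (equivalently ω(r^{1+α/p}) = u(r)). Then for every r ∈ (0,R), setting s = r^{1+α/p} and N = p(n+α)/(p+α), one has the pointwise identity |u'(r)|^{p-2}·((p-1)·u''(r) + ((n-1)/r)·u'(r)) = (1+α/p)^p · r^α · |ω'(s)|^{p-2}·((p-1)·ω''(s) + ((N-1)/s)·ω'(s)). -/

import Mathlib

open Real

/-- The change of variable `s = r^(1+α/p)` transforms the radial weighted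
`p`-Laplacian in dimension `n` into the unweighted radial `p`-Laplacian in the fractional
dimension `N = p(n+α)/(p+α)`:
`|u'(r)|^(p-2) ((p-1) u''(r) + ((n-1)/r) u'(r)) =
  (1+α/p)^p r^α |ω'(s)|^(p-2) ((p-1) ω''(s) + ((N-1)/s) ω'(s))`
where `ω(s) = u(s^(p/(p+α)))`. -/
theorem radial_change_of_variable
    (p α n R : ℝ) (hp : 2 ≤ p) (hα : 0 ≤ α) (hR : 0 < R)
    (u u' u'' : ℝ → ℝ)
    (hu : ∀ r ∈ Set.Ioo (0 : ℝ) R, HasDerivAt u (u' r) r)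
    (hu' : ∀ r ∈ Set.Ioo (0 : ℝ) R, HasDerivAt u' (u'' r) r)
    (ω : ℝ → ℝ) (hω : ∀ s : ℝ, ω s = u (s ^ (p / (p + α)))) :
    ∀ r ∈ Set.Ioo (0 : ℝ) R,
      |u' r| ^ (p - 2) * ((p - 1) * u'' r + ((n - 1) / r) * u' r) =
        (1 + α / p) ^ p * r ^ α *
          (|deriv ω (r ^ (1 + α / p))| ^ (p - 2) *
            ((p - 1) * deriv (deriv ω) (r ^ (1 + α / p)) +
              ((p * (n + α) / (p + α) - 1) / r ^ (1 + α / p)) *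
                deriv ω (r ^ (1 + α / p)))) := by
  have hp0 : (0:ℝ) < p := by linarith
  have hpa : (0:ℝ) < p + α := by linarith
  set β := p / (p + α) with hβ
  set γ := (p + α) / p with hγdef
  have hγ : (1 + α / p) = γ := by rw [hγdef]; field_simp
  have hβ0 : 0 < β := div_pos hp0 hpa
  have hγ0 : 0 < γ := div_pos hpa hp0
  have hβγ : γ * β = 1 := by rw [hβ, hγdef]; field_simp
  have hωe : ω = fun s => u (s ^ β) := funext hω
  -- derivative of ω on (0, R^γ)
  have key : ∀ x ∈ Set.Ioo (0:ℝ) (R ^ γ),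
      x ^ β ∈ Set.Ioo (0:ℝ) R ∧ HasDerivAt ω (u' (x ^ β) * (β * x ^ (β - 1))) x := by
    intro x hx
    have hx0 : 0 < x := hx.1
    have hmem : x ^ β ∈ Set.Ioo (0:ℝ) R := by
      refine ⟨rpow_pos_of_pos hx0 β, ?_⟩
      have h1 : x ^ β < (R ^ γ) ^ β := Real.rpow_lt_rpow hx0.le hx.2 hβ0
      rwa [← Real.rpow_mul hR.le, hβγ, Real.rpow_one] at h1
    refine ⟨hmem, ?_⟩
    have hpow : HasDerivAt (fun y : ℝ => y ^ β) (β * x ^ (β - 1)) x :=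
      Real.hasDerivAt_rpow_const (Or.inl hx0.ne')
    have := (hu _ hmem).comp x hpow
    rwa [hωe]
  intro r hr
  obtain ⟨hr0, hrR⟩ := hr
  have hs₀ : r ^ γ ∈ Set.Ioo (0:ℝ) (R ^ γ) :=
    ⟨rpow_pos_of_pos hr0 γ, Real.rpow_lt_rpow hr0.le hrR hγ0⟩
  have hs₀0 : 0 < r ^ γ := hs₀.1
  have hrβ : (r ^ γ) ^ β = r := by
    rw [← Real.rpow_mul hr0.le, hβγ, Real.rpow_one]
  have hd1 : HasDerivAt ω (u' r * (β * (r ^ γ) ^ (β - 1))) (r ^ γ) := by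
    have := (key _ hs₀).2; rwa [hrβ] at this
  have hderiv1 : deriv ω (r ^ γ) = u' r * (β * (r ^ γ) ^ (β - 1)) := hd1.deriv
  have hev : deriv ω =ᶠ[nhds (r ^ γ)] fun x => u' (x ^ β) * (β * x ^ (β - 1)) := by
    filter_upwards [isOpen_Ioo.mem_nhds hs₀] with x hx
    exact ((key x hx).2).deriv
  -- second derivative
  have hpow2 : HasDerivAt (fun y : ℝ => y ^ β) (β * (r ^ γ) ^ (β - 1)) (r ^ γ) :=
    Real.hasDerivAt_rpow_const (Or.inl hs₀0.ne')
  have h2a : HasDerivAt (fun x : ℝ => u' (x ^ β)) (u'' r * (β * (r ^ γ) ^ (β - 1))) (r ^ γ) := by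
    have := (hu' _ ((key _ hs₀).1)).comp (r ^ γ) hpow2
    rwa [hrβ] at this
  have h2b : HasDerivAt (fun x : ℝ => β * x ^ (β - 1)) (β * ((β - 1) * (r ^ γ) ^ (β - 1 - 1))) (r ^ γ) :=
    (Real.hasDerivAt_rpow_const (Or.inl hs₀0.ne')).const_mul β
  have hD2 : deriv (deriv ω) (r ^ γ) =
      u'' r * (β * (r ^ γ) ^ (β - 1)) * (β * (r ^ γ) ^ (β - 1)) +
        u' r * (β * ((β - 1) * (r ^ γ) ^ (β - 1 - 1))) := by
    rw [hev.deriv_eq]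
    have := (h2a.mul h2b).deriv
    rwa [hrβ] at this
  rw [hγ, hderiv1, hD2]
  -- algebraic identities
  set t := r ^ γ with ht
  have ht0 : 0 < t := hs₀0
  have e1 : t ^ (β - 1) = r / t := by
    rw [ht, ← Real.rpow_mul hr0.le, show γ * (β - 1) = 1 - γ by rw [mul_sub, hβγ]; ring,
      Real.rpow_sub hr0, Real.rpow_one]
  have e2 : t ^ (β - 1 - 1) = r / (t * t) := by
    rw [ht, ← Real.rpow_mul hr0.le,
      show γ * (β - 1 - 1) = 1 - γ - γ by rw [mul_sub, mul_sub, hβγ]; ring,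
      Real.rpow_sub hr0, Real.rpow_sub hr0, Real.rpow_one, div_div]
  have hrt0 : 0 < r / t := div_pos hr0 ht0
  have e3 : |u' r * (β * (r / t))| ^ (p - 2) =
      |u' r| ^ (p - 2) * (β ^ (p - 2) * (r / t) ^ (p - 2)) := by
    rw [abs_mul, abs_of_pos (mul_pos hβ0 hrt0),
      Real.mul_rpow (abs_nonneg _) (mul_pos hβ0 hrt0).le,
      Real.mul_rpow hβ0.le hrt0.le]
  have e5 : γ ^ p * β ^ (p - 2) = γ * γ := by
    have hβinv : β = γ⁻¹ := by rw [hβ, hγdef, inv_div]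
    rw [hβinv, Real.inv_rpow hγ0.le, ← div_eq_mul_inv, ← Real.rpow_sub hγ0,
      show p - (p - 2) = 2 by ring, show (2:ℝ) = ((2:ℕ):ℝ) by norm_num, Real.rpow_natCast]
    ring
  have e6 : r ^ α * (r / t) ^ (p - 2) = t * t / (r * r) := by
    have hα' : α = p * (γ - 1) := by rw [hγdef]; field_simp; ring
    have hh : r / t = r ^ (1 - γ) := by
      rw [Real.rpow_sub hr0, Real.rpow_one, ht]
    rw [hh, ← Real.rpow_mul hr0.le, ← Real.rpow_add hr0,
      show α + (1 - γ) * (p - 2) = γ + γ - (1 + 1) by rw [hα']; ring,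
      Real.rpow_sub hr0, Real.rpow_add hr0, Real.rpow_add hr0, Real.rpow_one, ← ht]
  rw [e1, e2, e3]
  have hM : (p - 1) * (u'' r * (β * (r / t)) * (β * (r / t)) +
        u' r * (β * ((β - 1) * (r / (t * t))))) +
      (p * (n + α) / (p + α) - 1) / t * (u' r * (β * (r / t))) =
      β * β * (r / t) * (r / t) * ((p - 1) * u'' r + (n - 1) / r * u' r) := by
    rw [hβ]
    field_simp
    ring
  rw [hM]
  have eOne : γ ^ p * r ^ α * (β ^ (p - 2) * (r / t) ^ (p - 2)) *
      (β * β * (r / t) * (r / t)) = 1 := by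
    have h : γ ^ p * r ^ α * (β ^ (p - 2) * (r / t) ^ (p - 2)) =
        (γ ^ p * β ^ (p - 2)) * (r ^ α * (r / t) ^ (p - 2)) := by ring
    rw [h, e5, e6]
    field_simp
    linear_combination (γ * β + 1) * hβγ
  linear_combination -(|u' r| ^ (p - 2) * ((p - 1) * u'' r + (n - 1) / r * u' r)) * eOne
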